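/- arXiv:0707.1109 — 2 statements merged into one kernel-verified Lean document; each statement's English description precedes it below -/
import Mathlib

section
/- Let F be a free non-abelian group acting on its boundary ∂F, and let a ∈ F satisfy |wing(a)| ≥ k for a positive integer k. Then for every Borel probability measure λ on ∂F there exists i ∈ {1,...,k} such that the pushforward measure a^i λ assigns mass at least 1 - 1/k to some closed ball of radius 1/k in (∂F, ρ). -/
/-- The inverse letter. -/
def invL {α : Type*} (p : α × Bool) : α × Bool := (p.1, !p.2)

/-- The formal inverse of a word. -/
def wInv {α : Type*} (W : List (α × Bool)) : List (α × Bool) :=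
  (W.map fun p => (p.1, !p.2)).reverse

/-- A word is reduced iff it is the reduced word of the free-group element it represents. -/
def IsReducedWord {α : Type*} [DecidableEq α] (W : List (α × Bool)) : Prop :=
  (FreeGroup.mk W).toWord = W

/-- A right-infinite reduced word. -/
def BoundaryWord {α : Type*} (s : ℕ → α × Bool) : Prop := ∀ i, s (i + 1) ≠ invL (s i)

/-- The hyperbolic boundary `∂F` of the free group: right-infinite reduced words. -/
def Boundary (α : Type*) := {s : ℕ → α × Bool // BoundaryWord s}

/-- Borel structure on the boundary (generated by the prefix cylinders). -/
instance {α : Type*} : MeasurableSpace (Boundary α) :=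
  MeasurableSpace.comap Subtype.val (@MeasurableSpace.pi ℕ (fun _ => α × Bool) (fun _ => ⊤))

/-- Gromov product of two right-infinite words. -/
noncomputable def gpInf2 {α : Type*} (s t : ℕ → α × Bool) : ℕ :=
  sSup {r : ℕ | ∀ i < r, s i = t i}

open scoped Classical in
/-- The boundary metric `ρ(w,v) = 1/((w|v)+1)`. -/
noncomputable def rhoB {α : Type*} (s t : ℕ → α × Bool) : ℝ :=
  if s = t then 0 else 1 / ((gpInf2 s t : ℝ) + 1)

/-- Cancellation length of a word against an infinite word. -/
def cancelLen {α : Type*} [DecidableEq α] (W : List (α × Bool)) (s : ℕ → α × Bool) : ℕ :=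
  ((List.range W.length).takeWhile fun i =>
    decide (W[W.length - 1 - i]? = some (invL (s i)))).length

/-- Left translation of an infinite reduced word by a free-group element. -/
def boundaryMul {α : Type*} [DecidableEq α] (a : FreeGroup α) (s : ℕ → α × Bool) :
    ℕ → α × Bool := fun i =>
  if h : i < a.toWord.length - cancelLen a.toWord s then
    a.toWord.get ⟨i, lt_of_lt_of_le h (Nat.sub_le _ _)⟩
  else s (i - (a.toWord.length - cancelLen a.toWord s) + cancelLen a.toWord s)

/-! ### Auxiliary lemmas -/

set_option linter.unusedSectionVars false

/-- The no-cancellation relation on letters. -/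
def chR {α : Type*} (p q : α × Bool) : Prop := q ≠ invL p

section Aux

variable {α : Type*} [DecidableEq α] {A X : List (α × Bool)}

lemma invL_invL (p : α × Bool) : invL (invL p) = p := by simp [invL]

lemma reduce_eq_self_of_chain' : ∀ {W : List (α × Bool)}, List.IsChain chR W →
    FreeGroup.reduce W = W := by
  intro W
  induction W with
  | nil => intro; rfl
  | cons p W ih =>
    intro h
    have hW : List.IsChain chR W := h.tail
    rw [FreeGroup.reduce.cons, ih hW]
    cases W with
    | nil => rfl
    | cons q tl =>
      have hpq : chR p q := (List.isChain_cons_cons.mp h).1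
      simp only
      rw [if_neg]
      rintro ⟨h1, h2⟩
      exact hpq (Prod.ext h1.symm (by simp [invL, h2]))

lemma chain'_of_reduce_eq_self {W : List (α × Bool)} (h : FreeGroup.reduce W = W) :
    List.IsChain chR W := by
  rw [List.isChain_iff_getElem]
  intro i hi
  by_contra hcon
  have h1 : i < W.length := by omega
  have h2 : i + 1 < W.length := by omega
  have hget : W.get ⟨i+1, h2⟩ = invL (W.get ⟨i, h1⟩) := not_not.mp hcon
  simp only [List.get_eq_getElem] at hget
  have hdec : W = W.take i ++ (W[i].1, W[i].2) :: (W[i].1, !W[i].2) :: W.drop (i+2) := by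
    conv_lhs => rw [← List.take_append_drop i W]
    rw [List.drop_eq_getElem_cons h1, List.drop_eq_getElem_cons h2, hget]
    rfl
  exact FreeGroup.reduce.not (h.trans hdec)

lemma isReducedWord_iff_chain' {W : List (α × Bool)} :
    IsReducedWord W ↔ List.IsChain chR W := by
  rw [IsReducedWord, FreeGroup.toWord_mk]
  exact ⟨chain'_of_reduce_eq_self, reduce_eq_self_of_chain'⟩

lemma wInv_eq_invRev (W : List (α × Bool)) : wInv W = FreeGroup.invRev W := rfl

lemma chain'_wInv {W : List (α × Bool)} (h : List.IsChain chR W) :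
    List.IsChain chR (wInv W) := by
  have hrw : wInv W = (W.map invL).reverse := rfl
  rw [hrw, List.isChain_reverse, List.isChain_map]
  refine h.imp ?_
  intro a b hab
  show invL a ≠ invL (invL b)
  rw [invL_invL]
  intro he
  exact hab he.symm

lemma head?_wInv {W : List (α × Bool)} (h : W ≠ []) :
    (wInv W).head? = some (invL (W.getLast h)) := by
  have hrw : wInv W = (W.map invL).reverse := rfl
  rw [hrw, List.head?_reverse, List.getLast?_map, List.getLast?_eq_getLast h]
  rfl

lemma length_wInv (W : List (α × Bool)) : (wInv W).length = W.length := by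
  simp [wInv]

lemma get?_last {W : List (α × Bool)} (h : W ≠ []) :
    W[W.length - 1]? = some (W.getLast h) := by
  rw [List.getLast?_eq_getLast h |>.symm, List.getLast?_eq_getElem?]

lemma takeWhile_range_eq {L : ℕ} {P : ℕ → Bool} :
    (List.range L).takeWhile P = List.range (((List.range L).takeWhile P).length) := by
  have h1 := List.takeWhile_prefix (l := List.range L) P
  have hle := h1.length_le
  rw [List.prefix_iff_eq_take] at h1
  simp only [List.length_range] at hle
  conv_lhs => rw [h1, List.take_range]
  rw [Nat.min_eq_left hle]

lemma cancelLen_spec {W : List (α × Bool)} {s : ℕ → α × Bool} {j : ℕ}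
    (h : j < cancelLen W s) : W[W.length - 1 - j]? = some (invL (s j)) := by
  have hmem : j ∈ (List.range W.length).takeWhile
      (fun i => decide (W[W.length - 1 - i]? = some (invL (s i)))) := by
    rw [takeWhile_range_eq]
    exact List.mem_range.mpr h
  simpa using List.mem_takeWhile_imp hmem

lemma cancelLen_le_of_not {W : List (α × Bool)} {s : ℕ → α × Bool} {j : ℕ}
    (h : ¬ (W[W.length - 1 - j]? = some (invL (s j)))) :
    cancelLen W s ≤ j := by
  by_contra hcon
  exact h (cancelLen_spec (by omega))

lemma flatten_replicate_succ (n : ℕ) :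
    (List.replicate (n+1) A).flatten = A ++ (List.replicate n A).flatten := by
  rw [List.replicate_succ, List.flatten_cons]

lemma length_flatten_replicate (n : ℕ) :
    (List.replicate n A).flatten.length = n * A.length := by
  induction n with
  | zero => simp
  | succ n ih => rw [flatten_replicate_succ, List.length_append, ih]; ring

lemma head?_flatten_replicate (hA : A ≠ []) {n : ℕ} (hn : 1 ≤ n) :
    (List.replicate n A).flatten.head? = A.head? := by
  obtain ⟨m, rfl⟩ := Nat.exists_eq_add_of_le hn
  rw [Nat.add_comm, flatten_replicate_succ, List.head?_append, List.head?_eq_head hA]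
  rfl

lemma getLast?_flatten_replicate (hA : A ≠ []) : ∀ {n : ℕ}, 1 ≤ n →
    (List.replicate n A).flatten.getLast? = A.getLast? := by
  intro n hn
  induction n with
  | zero => omega
  | succ n ih =>
    rw [flatten_replicate_succ]
    rcases Nat.eq_or_lt_of_le hn with h | h
    · have : n = 0 := by omega
      subst this
      simp
    · rw [List.getLast?_append, ih (by omega), List.getLast?_eq_getLast hA]
      rfl

lemma chain'_flatten_replicate (hA : A ≠ []) (cA : List.IsChain chR A)
    (jAA : ∀ x ∈ A.getLast?, ∀ y ∈ A.head?, chR x y) (n : ℕ) :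
    List.IsChain chR (List.replicate n A).flatten := by
  induction n with
  | zero => exact List.isChain_nil
  | succ n ih =>
    rw [flatten_replicate_succ]
    refine List.isChain_append.mpr ⟨cA, ih, ?_⟩
    intro x hx y hy
    rcases Nat.eq_zero_or_pos n with rfl | hn
    · simp at hy
    · rw [head?_flatten_replicate hA hn] at hy
      exact jAA x hx y hy

lemma get?_flatten_replicate (hA : A ≠ []) : ∀ (n t : ℕ), 1 ≤ t → t ≤ n →
    ((List.replicate n A).flatten)[t * A.length - 1]? = some (A.getLast hA) := by
  intro n
  induction n with
  | zero => intro t h1 h2; omega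
  | succ n ih =>
    intro t h1 h2
    rw [flatten_replicate_succ]
    have hAl : 1 ≤ A.length := List.length_pos_iff.mpr hA
    rcases Nat.eq_or_lt_of_le h1 with h | h
    · subst h
      rw [List.getElem?_append_left (by omega), one_mul]
      exact get?_last hA
    · obtain ⟨s, rfl⟩ : ∃ s, t = s + 2 := ⟨t - 2, by omega⟩
      have hkey : (s+2) * A.length = (s+1) * A.length + A.length := by ring
      have hpos : 1 ≤ (s+1) * A.length :=
        Nat.one_le_iff_ne_zero.mpr (Nat.mul_ne_zero (by omega) (by omega))
      rw [List.getElem?_append_right (by omega)]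
      have harith : (s+2) * A.length - 1 - A.length = (s+1) * A.length - 1 := by omega
      rw [harith]
      exact ih (s+1) (by omega) (by omega)

end Aux

open MeasureTheory in
/-- If `a ∈ F` has wing of length at least `k ≥ 1`, then for every Borel probability measure
`λ` on `∂F` there is `i ∈ {1, …, k}` such that the pushforward of `λ` by `a^i` gives mass at
least `1 - 1/k` to some closed ball of radius `1/k`: the collection `{a, …, a^k}` is totally
`1/k`-contracting. -/
theorem power_collection_contracting {α : Type*} [DecidableEq α]
    (a : FreeGroup α) (X A : List (α × Bool)) (hX : IsReducedWord X)
    (hAcyc : IsReducedWord (A ++ A)) (hdec : a.toWord = X ++ A ++ wInv X)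
    (k : ℕ) (hk : 0 < k) (hwing : k ≤ X.length)
    (lam : Measure (Boundary α)) (hlam : IsProbabilityMeasure lam) :
    ∃ i : ℕ, 1 ≤ i ∧ i ≤ k ∧ ∃ v : Boundary α,
      1 - 1 / (k : ENNReal) ≤
        lam {w : Boundary α | rhoB (boundaryMul (a ^ i) w.1) v.1 ≤ 1 / (k : ℝ)} := by
  classical
  have hXne : X ≠ [] := by
    intro h
    rw [h] at hwing
    simp at hwing
    omega
  have cX : List.IsChain chR X := isReducedWord_iff_chain'.mp hX
  have cAA : List.IsChain chR (A ++ A) := isReducedWord_iff_chain'.mp hAcyc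
  have cA : List.IsChain chR A := (List.isChain_append.mp cAA).1
  have hred : IsReducedWord a.toWord := by
    rw [IsReducedWord, FreeGroup.mk_toWord]
  have cfull : List.IsChain chR ((X ++ A) ++ wInv X) := by
    have h := isReducedWord_iff_chain'.mp hred
    rwa [hdec] at h
  have cXA : List.IsChain chR (X ++ A) := (List.isChain_append.mp cfull).1
  have jfull := (List.isChain_append.mp cfull).2.2
  -- A is nonempty
  have hAne : A ≠ [] := by
    intro h
    subst h
    simp only [List.append_nil] at jfull
    have := jfull (X.getLast hXne)
      (Option.mem_def.mpr (List.getLast?_eq_getLast hXne))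
      (invL (X.getLast hXne)) (Option.mem_def.mpr (head?_wInv hXne))
    exact this rfl
  have hAl : 1 ≤ A.length := List.length_pos_iff.mpr hAne
  have jAA : ∀ x ∈ A.getLast?, ∀ y ∈ A.head?, chR x y := (List.isChain_append.mp cAA).2.2
  have jXA : chR (X.getLast hXne) (A.head hAne) :=
    (List.isChain_append.mp cXA).2.2 _ (Option.mem_def.mpr (List.getLast?_eq_getLast hXne))
      _ (Option.mem_def.mpr (List.head?_eq_head hAne))
  have jAW : chR (A.getLast hAne) (invL (X.getLast hXne)) := by
    refine jfull _ ?_ _ (Option.mem_def.mpr (head?_wInv hXne))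
    rw [Option.mem_def, List.getLast?_append, List.getLast?_eq_getLast hAne]
    rfl
  have hlastne : X.getLast hXne ≠ A.getLast hAne := by
    intro h
    exact jAW (by rw [h])
  -- the word of a^i
  have hpow : ∀ i : ℕ, 1 ≤ i →
      (a ^ i).toWord = (X ++ (List.replicate i A).flatten) ++ wInv X := by
    intro i hi
    have ha : a = FreeGroup.mk X * FreeGroup.mk A * (FreeGroup.mk X)⁻¹ := by
      conv_lhs => rw [← FreeGroup.mk_toWord (x := a), hdec]
      rw [wInv_eq_invRev, ← FreeGroup.mul_mk, ← FreeGroup.mul_mk, ← FreeGroup.inv_mk]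
    have hpw : a ^ i = FreeGroup.mk ((X ++ (List.replicate i A).flatten) ++ wInv X) := by
      rw [ha, conj_pow, FreeGroup.pow_mk, FreeGroup.inv_mk, FreeGroup.mul_mk,
        FreeGroup.mul_mk, ← wInv_eq_invRev]
    rw [hpw, FreeGroup.toWord_mk]
    apply reduce_eq_self_of_chain'
    have cAi : List.IsChain chR (List.replicate i A).flatten :=
      chain'_flatten_replicate hAne cA jAA i
    refine List.isChain_append.mpr ⟨List.isChain_append.mpr ⟨cX, cAi, ?_⟩, chain'_wInv cX, ?_⟩
    · intro x hx y hy
      rw [Option.mem_def, List.getLast?_eq_getLast hXne] at hx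
      rw [Option.mem_def, head?_flatten_replicate hAne hi, List.head?_eq_head hAne] at hy
      cases hx; cases hy
      exact jXA
    · intro x hx y hy
      rw [Option.mem_def, List.getLast?_append, getLast?_flatten_replicate hAne hi,
        List.getLast?_eq_getLast hAne] at hx
      rw [Option.mem_def, head?_wInv hXne] at hy
      cases hx; cases hy
      exact jAW
  have hlen : ∀ i : ℕ, 1 ≤ i →
      (a ^ i).toWord.length = X.length + i * A.length + X.length := by
    intro i hi
    rw [hpow i hi]
    simp [length_wInv, length_flatten_replicate]
    omega
  -- the bad cylinders
  set m : ℕ → ℕ := fun i => X.length + i * A.length with hm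
  set D : ℕ → Set (Boundary α) := fun i =>
    {w | ∀ j ≤ m i, (a ^ i).toWord[(a ^ i).toWord.length - 1 - j]?
      = some (invL (w.1 j))} with hD
  -- the word value at the distinguishing position
  have eSelf : ∀ i : ℕ, 1 ≤ i →
      (a ^ i).toWord[(a ^ i).toWord.length - 1 - m i]? = some (X.getLast hXne) := by
    intro i hi
    have hidx : (a ^ i).toWord.length - 1 - m i = X.length - 1 := by
      rw [hlen i hi]; simp only [hm]; omega
    rw [hidx, hpow i hi,
      List.getElem?_append_left (by
        rw [List.length_append, length_flatten_replicate]
        have := List.length_pos_iff.mpr hXne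
        omega),
      List.getElem?_append_left (by have := List.length_pos_iff.mpr hXne; omega)]
    exact get?_last hXne
  have eLower : ∀ i j : ℕ, 1 ≤ i → i < j →
      (a ^ j).toWord[(a ^ j).toWord.length - 1 - m i]? = some (A.getLast hAne) := by
    intro i j hi hij
    have hXl := List.length_pos_iff.mpr hXne
    have hj1 : 1 ≤ j := by omega
    set t : ℕ := j - i with ht
    have htj : j = i + t := by omega
    have hmul : j * A.length = i * A.length + t * A.length := by
      rw [htj, Nat.add_mul]
    have htpos : 1 ≤ t * A.length :=
      Nat.one_le_iff_ne_zero.mpr (Nat.mul_ne_zero (by omega) (by omega))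
    have htle : t * A.length ≤ j * A.length := by omega
    have hidx : (a ^ j).toWord.length - 1 - m i = X.length + (t * A.length - 1) := by
      rw [hlen j hj1]; simp only [hm]; omega
    rw [hidx, hpow j hj1,
      List.getElem?_append_left (by
        rw [List.length_append, length_flatten_replicate]
        omega),
      List.getElem?_append_right (by omega)]
    have : X.length + (t * A.length - 1) - X.length = t * A.length - 1 := by omega
    rw [this]
    exact get?_flatten_replicate hAne j t (by omega) (by omega)
  -- disjointness
  have hDkey : ∀ i j : ℕ, 1 ≤ i → i < j → ∀ w, w ∈ D i → w ∈ D j → False := by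
    intro i j hi hij w hwi hwj
    have hmle : m i ≤ m j := by
      simp only [hm]
      have : i * A.length ≤ j * A.length := Nat.mul_le_mul_right _ (by omega)
      omega
    have e1 := hwi (m i) le_rfl
    have e2 := hwj (m i) hmle
    rw [eSelf i hi] at e1
    rw [eLower i j hi hij] at e2
    have := (Option.some.inj e1).trans (Option.some.inj e2).symm
    exact hlastne this
  have hDdisj : (↑(Finset.Icc 1 k) : Set ℕ).PairwiseDisjoint D := by
    intro i hi j hj hij
    simp only [Finset.coe_Icc, Set.mem_Icc] at hi hj
    rcases lt_or_gt_of_ne hij with h | h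
    · exact Set.disjoint_left.mpr fun w hwi hwj => hDkey i j hi.1 h w hwi hwj
    · exact Set.disjoint_right.mpr fun w hwj hwi => hDkey j i hj.1 h w hwj hwi
  -- measurability
  have hDmeas : ∀ i : ℕ, MeasurableSet (D i) := by
    intro i
    have hrw : D i = Subtype.val ⁻¹' {g : ℕ → α × Bool | ∀ j ≤ m i,
        (a ^ i).toWord[(a ^ i).toWord.length - 1 - j]? = some (invL (g j))} := rfl
    rw [hrw]
    refine MeasurableSpace.measurableSet_comap.mpr ?_
    refine ⟨_, ?_, rfl⟩
    have hSrw : {g : ℕ → α × Bool | ∀ j ≤ m i,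
        (a ^ i).toWord[(a ^ i).toWord.length - 1 - j]? = some (invL (g j))} =
        ⋂ j ∈ Set.Iic (m i), (fun g : ℕ → α × Bool => g j) ⁻¹'
          {p | (a ^ i).toWord[(a ^ i).toWord.length - 1 - j]? = some (invL p)} := by
      ext g
      simp only [Set.mem_setOf_eq, Set.mem_iInter, Set.mem_preimage, Set.mem_Iic]
    rw [hSrw]
    refine MeasurableSet.biInter (Set.to_countable _) fun j _ => ?_
    exact @measurable_pi_apply ℕ (fun _ => α × Bool) (fun _ => ⊤) j _ trivial
  -- pigeonhole: some D i has small measure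
  have hfin : ∀ i : ℕ, lam (D i) ≠ ⊤ := fun i => measure_ne_top lam _
  have hsum : ∑ i ∈ Finset.Icc 1 k, lam (D i) ≤ 1 := by
    rw [← measure_biUnion_finset hDdisj (fun b _ => hDmeas b)]
    exact prob_le_one
  have hsumR : ∑ i ∈ Finset.Icc 1 k, (lam (D i)).toReal ≤ 1 := by
    rw [← ENNReal.toReal_sum (fun i _ => hfin i)]
    calc (∑ i ∈ Finset.Icc 1 k, lam (D i)).toReal ≤ (1 : ENNReal).toReal :=
          ENNReal.toReal_mono (by simp) hsum
      _ = 1 := by simp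
  have hconst : ∑ _i ∈ Finset.Icc 1 k, (1 / (k : ℝ)) = 1 := by
    rw [Finset.sum_const, Nat.card_Icc]
    simp only [Nat.add_sub_cancel, nsmul_eq_mul]
    field_simp
  obtain ⟨i, hik, hile⟩ := Finset.exists_le_of_sum_le (f := fun i => (lam (D i)).toReal)
    (g := fun _ => 1 / (k : ℝ)) ⟨1, Finset.mem_Icc.mpr ⟨le_rfl, hk⟩⟩
    (hsumR.trans_eq hconst.symm)
  rw [Finset.mem_Icc] at hik
  obtain ⟨hi1, hik2⟩ := hik
  have hDi : lam (D i) ≤ 1 / (k : ENNReal) := by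
    have h1 := ENNReal.ofReal_le_ofReal hile
    rw [ENNReal.ofReal_toReal (hfin i)] at h1
    refine h1.trans_eq ?_
    rw [one_div, one_div, ENNReal.ofReal_inv_of_pos (by positivity),
      ENNReal.ofReal_natCast]
  -- the target point v
  have hkX : k - 1 < X.length := by omega
  refine ⟨i, hi1, hik2, ⟨fun p => X.get ⟨min p (k - 1), lt_of_le_of_lt (min_le_right _ _) hkX⟩,
    ?_⟩, ?_⟩
  · -- v is a boundary word
    intro p
    rcases le_or_gt (p + 1) (k - 1) with h | h
    · have h1 : min (p + 1) (k - 1) = p + 1 := by omega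
      have h2 : min p (k - 1) = p := by omega
      have hch := List.isChain_iff_getElem.mp cX p (by omega)
      simp only [h1, h2]
      exact hch
    · have h1 : min (p + 1) (k - 1) = k - 1 := by omega
      have h2 : min p (k - 1) = k - 1 := by omega
      simp only [h1, h2]
      intro hcon
      have := congrArg Prod.snd hcon
      simp [invL] at this
  · -- the measure bound
    set v : ℕ → α × Bool :=
      fun p => X.get ⟨min p (k - 1), lt_of_le_of_lt (min_le_right _ _) hkX⟩ with hv
    -- the complement of D i lands in the ball
    have hball : ∀ w : Boundary α, w ∉ D i →
        rhoB (boundaryMul (a ^ i) w.1) v ≤ 1 / (k : ℝ) := by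
      intro w hw
      simp only [hD, Set.mem_setOf_eq, not_forall] at hw
      obtain ⟨j, hj, hfail⟩ := hw
      have hc : cancelLen (a ^ i).toWord w.1 ≤ m i :=
        le_trans (cancelLen_le_of_not hfail) hj
      have hlen_i := hlen i hi1
      have hko : ∀ p, p < k →
          p < (a ^ i).toWord.length - cancelLen (a ^ i).toWord w.1 := by
        intro p hp
        simp only [hm] at hc
        omega
      set s : ℕ → α × Bool := boundaryMul (a ^ i) w.1 with hs
      have hsval : ∀ p (hp : p < k), s p = X.get ⟨p, by omega⟩ := by
        intro p hp
        have hp' : p < (a ^ i).toWord.length := by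
          rw [hlen_i]; omega
        have hv1 : s p = (a ^ i).toWord.get ⟨p, hp'⟩ := by
          simp only [hs, boundaryMul]
          rw [dif_pos (hko p hp)]
        have hv2 : (a ^ i).toWord[p]? = X[p]? := by
          rw [hpow i hi1,
            List.getElem?_append_left (by
              rw [List.length_append, length_flatten_replicate]; omega),
            List.getElem?_append_left (by omega)]
        rw [List.getElem?_eq_getElem hp', List.getElem?_eq_getElem (by omega : p < X.length)] at hv2
        rw [hv1]; exact Option.some.inj hv2
      by_cases heq : s = v
      · rw [rhoB, if_pos heq]
        positivity
      · rw [rhoB, if_neg heq]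
        have hgp : k ≤ gpInf2 s v := by
          obtain ⟨d, hd⟩ := Function.ne_iff.mp heq
          have hub : ∀ r ∈ {r : ℕ | ∀ i < r, s i = v i}, r ≤ d := by
            intro r hr
            by_contra hcon
            exact hd (hr d (by omega))
          refine le_csSup ⟨d, hub⟩ ?_
          intro p hp
          rw [hsval p hp]
          simp only [hv]
          congr 1
          exact Fin.ext (by simp; omega)
        have hk' : (0 : ℝ) < k := Nat.cast_pos.mpr hk
        have hcast : (k : ℝ) ≤ (gpInf2 s v : ℝ) + 1 := by
          exact_mod_cast Nat.le_succ_of_le hgp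
        exact one_div_le_one_div_of_le hk' hcast
    calc 1 - 1 / (k : ENNReal)
        ≤ 1 - lam (D i) := tsub_le_tsub_left hDi 1
      _ = lam (D i)ᶜ := (prob_compl_eq_one_sub (hDmeas i)).symm
      _ ≤ lam {w : Boundary α | rhoB (boundaryMul (a ^ i) w.1) v ≤ 1 / (k : ℝ)} :=
          measure_mono fun w hw => hball w hw
end

section
/- Let G be a countable group, H ⊆ G a cofinite subset (i.e., HJ = G for some finite J ⊆ G), and μ a nondegenerate probability measure on G. Then almost every path of the right random μ-walk on G visits H infinitely often. -/
open MeasureTheory ProbabilityTheory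

/-- Position of the right random walk after `n` steps: the ordered product of the first `n`
increments. -/
def walk {G Ω : Type*} [Group G] (X : ℕ → Ω → G) (ω : Ω) (n : ℕ) : G :=
  ((List.range n).map fun i => X i ω).prod

/-- `X` is a realization of the right random `μ`-walk increments: an i.i.d. sequence with
common distribution `μ`. -/
def IsRW {G Ω : Type*} [Group G] [MeasurableSpace G] [MeasurableSpace Ω]
    (μ : Measure G) (P : Measure Ω) (X : ℕ → Ω → G) : Prop :=
  (∀ i, Measurable (X i)) ∧ iIndepFun X P ∧
    ∀ i, Measure.map (X i) P = μ


set_option linter.unusedSectionVars false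

section Aux

variable {G Ω : Type*} [Group G] [Countable G] [MeasurableSpace G] [MeasurableSingletonClass G]
  [MeasurableSpace Ω] {P : Measure Ω} [IsProbabilityMeasure P] {μ : Measure G}
  {X : ℕ → Ω → G}

lemma walk_succ (X : ℕ → Ω → G) (ω : Ω) (n : ℕ) :
    walk X ω (n + 1) = walk X ω n * X n ω := by
  simp [walk, List.range_succ]

lemma walk_add (X : ℕ → Ω → G) (ω : Ω) (a b : ℕ) :
    walk X ω (a + b) = walk X ω a * ((List.range b).map fun i => X (a + i) ω).prod := by
  simp [walk, List.range_add, List.map_map, Function.comp_def]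

lemma measurable_walk (hm : ∀ i, Measurable (X i)) (n : ℕ) :
    Measurable fun ω => walk X ω n := by
  induction n with
  | zero => simp [walk]
  | succ n ih =>
    have : (fun ω => walk X ω (n + 1))
        = fun ω => (fun p : G × G => p.1 * p.2) (walk X ω n, X n ω) := by
      funext ω; simp [walk_succ]
    rw [this]
    exact (measurable_of_countable fun p : G × G => p.1 * p.2).comp (ih.prodMk (hm n))

lemma cyl_meas (hX : IsRW μ P X) (N : ℕ) (c : ℕ → G) :
    P {ω | ∀ i < N, X i ω = c i} = ∏ i ∈ Finset.range N, μ {c i} := by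
  obtain ⟨hm, hind, hmap⟩ := hX
  have h := hind.measure_inter_preimage_eq_mul (Finset.range N) (sets := fun i => {c i})
    (fun i _ => measurableSet_singleton _)
  have hset : {ω | ∀ i < N, X i ω = c i} = ⋂ i ∈ Finset.range N, X i ⁻¹' {c i} := by
    ext ω; simp [Finset.mem_range]
  rw [hset, h]
  exact Finset.prod_congr rfl fun i _ => by
    rw [← hmap i, Measure.map_apply (hm i) (measurableSet_singleton _)]

/-- extend a finite tuple by 1 -/
def extv {G : Type*} [Group G] {N : ℕ} (v : Fin N → G) (i : ℕ) : G :=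
  if h : i < N then v ⟨i, h⟩ else 1

/-- cylinder set -/
def cylSet {G Ω : Type*} [Group G] (X : ℕ → Ω → G) (N : ℕ) (v : Fin N → G) : Set Ω :=
  {ω | ∀ i < N, X i ω = extv v i}

lemma extv_coe {N : ℕ} (v : Fin N → G) (i : Fin N) : extv v i = v i := by
  simp [extv, i.isLt]

lemma measurableSet_cylSet (hm : ∀ i, Measurable (X i)) (N : ℕ) (v : Fin N → G) :
    MeasurableSet (cylSet X N v) := by
  have : cylSet X N v = ⋂ i ∈ Finset.range N, X i ⁻¹' {extv v i} := by
    ext ω; simp [cylSet, Finset.mem_range]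
  rw [this]
  exact MeasurableSet.biInter (Finset.range N).countable_toSet
    fun i _ => (hm i) (measurableSet_singleton _)

lemma pairwise_disjoint_cylSet (N : ℕ) :
    Pairwise (Function.onFun Disjoint fun v : Fin N → G => cylSet X N v) := by
  intro v v' hvv'
  obtain ⟨i, hi⟩ := Function.ne_iff.mp hvv'
  rw [Function.onFun, Set.disjoint_left]
  intro ω h1 h2
  have e1 := h1 i i.isLt
  have e2 := h2 i i.isLt
  rw [extv_coe] at e1 e2
  exact hi (e1 ▸ e2)

lemma iUnion_cylSet (N : ℕ) : (⋃ v : Fin N → G, cylSet X N v) = Set.univ := by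
  ext ω
  simp only [Set.mem_iUnion, Set.mem_univ, iff_true]
  exact ⟨fun i => X i.val ω, fun i hi => by simp [extv, hi]⟩

lemma walk_cylSet {N : ℕ} {v : Fin N → G} {ω : Ω} (hω : ω ∈ cylSet X N v) :
    walk X ω N = ((List.range N).map (extv v)).prod :=
  congrArg List.prod (List.map_congr_left fun i hi => hω i (List.mem_range.mp hi))

lemma meas_cylSet (hX : IsRW μ P X) (N : ℕ) (v : Fin N → G) :
    P (cylSet X N v) = ∏ i ∈ Finset.range N, μ {extv v i} :=
  cyl_meas hX N (extv v)

lemma map_range_getD (u : List G) :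
    (List.range u.length).map (fun i => u.getD i 1) = u := by
  induction u with
  | nil => simp
  | cons a l ih =>
    rw [List.length_cons, List.range_succ_eq_map, List.map_cons, List.map_map]
    simp only [List.getD_cons_zero, List.getD_cons_succ, Function.comp]
    exact congrArg (a :: ·) ih

lemma prod_map_eq_prod_range (f : G → ENNReal) (u : List G) :
    (u.map f).prod = ∏ i ∈ Finset.range u.length, f (u.getD i 1) := by
  conv_lhs => rw [← map_range_getD u, List.map_map]
  rfl

end Aux

open MeasureTheory ProbabilityTheory

section Step

variable {G Ω : Type*} [Group G] [Countable G] [MeasurableSpace G] [MeasurableSingletonClass G]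
  [MeasurableSpace Ω] {P : Measure Ω} [IsProbabilityMeasure P] {μ : Measure G}
  {X : ℕ → Ω → G}

set_option linter.unusedSectionVars false

/-- probability that the cylinder is followed by the word `u` as increments -/
lemma cyl_word_meas (hX : IsRW μ P X) (N : ℕ) (v : Fin N → G) (u : List G) :
    P (cylSet X N v ∩ {ω | ∀ i < u.length, X (N + i) ω = u.getD i 1})
      = P (cylSet X N v) * (u.map fun x => μ {x}).prod := by
  classical
  set d : ℕ → G := fun i => if h : i < N then extv v i else u.getD (i - N) 1 with hd
  have hset : cylSet X N v ∩ {ω | ∀ i < u.length, X (N + i) ω = u.getD i 1}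
      = {ω | ∀ i < N + u.length, X i ω = d i} := by
    ext ω
    constructor
    · rintro ⟨h1, h2⟩ i hi
      by_cases h : i < N
      · simp only [hd, dif_pos h]; exact h1 i h
      · simp only [hd, dif_neg h]
        have : i = N + (i - N) := by omega
        rw [this]
        simpa using h2 (i - N) (by omega)
    · intro h
      refine ⟨fun i hi => ?_, fun i hi => ?_⟩
      · have := h i (by omega)
        simp only [hd] at this
        rwa [dif_pos hi] at this
      · have := h (N + i) (by omega)
        have hn : ¬ N + i < N := by omega
        simp only [hd] at this
        rwa [dif_neg hn, Nat.add_sub_cancel_left] at this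
  rw [hset, cyl_meas hX, Finset.prod_range_add, meas_cylSet hX, prod_map_eq_prod_range]
  congr 1
  · exact Finset.prod_congr rfl fun i hi => by
      simp only [hd]; rw [dif_pos (Finset.mem_range.mp hi)]
  · exact Finset.prod_congr rfl fun i _ => by
      have hn : ¬ N + i < N := by omega
      simp only [hd]; rw [dif_neg hn, Nat.add_sub_cancel_left]

lemma cyl_step (hX : IsRW μ P X) (N : ℕ) (v : Fin N → G) (u : List G)
    (B : Set Ω)
    (hB : ∀ ω ∈ cylSet X N v, (∀ i < u.length, X (N + i) ω = u.getD i 1) → ω ∉ B) :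
    P (B ∩ cylSet X N v) ≤ (1 - (u.map fun x => μ {x}).prod) * P (cylSet X N v) := by
  classical
  set q := (u.map fun x => μ {x}).prod with hq
  set F : Set Ω := {ω | ∀ i < u.length, X (N + i) ω = u.getD i 1} with hF
  have hFmeas : MeasurableSet (cylSet X N v ∩ F) := by
    refine (measurableSet_cylSet hX.1 N v).inter ?_
    have : F = ⋂ i ∈ Finset.range u.length, X (N + i) ⁻¹' {u.getD i 1} := by
      ext ω; simp [hF, Finset.mem_range]
    rw [this]
    exact MeasurableSet.biInter (Finset.range u.length).countable_toSet
      fun i _ => (hX.1 (N + i)) (measurableSet_singleton _)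
  have hsub : B ∩ cylSet X N v ⊆ cylSet X N v \ (cylSet X N v ∩ F) := by
    rintro ω ⟨hωB, hωc⟩
    exact ⟨hωc, fun ⟨_, hωF⟩ => hB ω hωc hωF hωB⟩
  calc P (B ∩ cylSet X N v) ≤ P (cylSet X N v \ (cylSet X N v ∩ F)) := measure_mono hsub
    _ = P (cylSet X N v) - P (cylSet X N v ∩ F) :=
        measure_diff Set.inter_subset_left hFmeas.nullMeasurableSet (measure_ne_top P _)
    _ = P (cylSet X N v) - P (cylSet X N v) * q := by rw [cyl_word_meas hX]
    _ = (1 - q) * P (cylSet X N v) := by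
        rw [ENNReal.sub_mul (fun _ _ => measure_ne_top P _), one_mul, mul_comm]

end Step

section Main

variable {G Ω : Type*} [Group G] [Countable G] [MeasurableSpace G] [MeasurableSingletonClass G]
  [MeasurableSpace Ω] {P : Measure Ω} [IsProbabilityMeasure P] {μ : Measure G}
  {X : ℕ → Ω → G}

set_option linter.unusedSectionVars false

lemma window_step (hX : IsRW μ P X) {H : Set G} {L : ℕ} {δ : ENNReal}
    (hword : ∀ g : G, ∃ u : List G, 1 ≤ u.length ∧ u.length ≤ L ∧ g * u.prod ∈ H ∧
      δ ≤ (u.map fun x => μ {x}).prod)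
    (K : ℕ) (E : Set Ω) (hEmeas : MeasurableSet E)
    (hEpre : ∀ ω ω', (∀ i < K * L, X i ω = X i ω') → ω ∈ E → ω' ∈ E) :
    P (E ∩ {ω | ∀ m, K * L < m → m ≤ (K + 1) * L → walk X ω m ∉ H})
      ≤ (1 - δ) * P E := by
  classical
  set N := K * L with hN
  have hKL : (K + 1) * L = N + L := by rw [hN]; ring
  set B : Set Ω := {ω | ∀ m, N < m → m ≤ (K + 1) * L → walk X ω m ∉ H} with hB
  have hBmeas : MeasurableSet B := by
    have : B = ⋂ m, ⋂ (_ : N < m), ⋂ (_ : m ≤ (K + 1) * L), (fun ω => walk X ω m) ⁻¹' Hᶜ := by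
      ext ω; simp [hB]
    rw [this]
    exact MeasurableSet.iInter fun m => MeasurableSet.iInter fun _ =>
      MeasurableSet.iInter fun _ =>
        (measurable_walk hX.1 m) (Set.to_countable Hᶜ).measurableSet
  have hdisj1 : Pairwise (Function.onFun Disjoint fun v : Fin N → G => E ∩ B ∩ cylSet X N v) :=
    fun v v' h => ((pairwise_disjoint_cylSet (X := X) N h).mono
      Set.inter_subset_right Set.inter_subset_right)
  have hdisj2 : Pairwise (Function.onFun Disjoint fun v : Fin N → G => E ∩ cylSet X N v) :=
    fun v v' h => ((pairwise_disjoint_cylSet (X := X) N h).mono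
      Set.inter_subset_right Set.inter_subset_right)
  have hEB : E ∩ B = ⋃ v : Fin N → G, (E ∩ B ∩ cylSet X N v) := by
    rw [← Set.inter_iUnion, iUnion_cylSet, Set.inter_univ]
  have hE' : E = ⋃ v : Fin N → G, (E ∩ cylSet X N v) := by
    rw [← Set.inter_iUnion, iUnion_cylSet, Set.inter_univ]
  rw [hEB, measure_iUnion hdisj1
    (fun v => (hEmeas.inter hBmeas).inter (measurableSet_cylSet hX.1 N v))]
  conv_rhs => rw [hE', measure_iUnion hdisj2
    (fun v => hEmeas.inter (measurableSet_cylSet hX.1 N v)), ← ENNReal.tsum_mul_left]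
  apply ENNReal.tsum_le_tsum
  intro v
  by_cases hv : (E ∩ cylSet X N v).Nonempty
  · obtain ⟨ω0, hω0E, hω0c⟩ := hv
    have hsubE : cylSet X N v ⊆ E := fun ω hω =>
      hEpre ω0 ω (fun i hi => by rw [hω0c i hi, hω i hi]) hω0E
    obtain ⟨u, hu1, hu2, huH, huδ⟩ := hword (((List.range N).map (extv v)).prod)
    have hB' : ∀ ω ∈ cylSet X N v, (∀ i < u.length, X (N + i) ω = u.getD i 1) → ω ∉ B := by
      intro ω hωc hωF hωB
      have hw : walk X ω (N + u.length) = ((List.range N).map (extv v)).prod * u.prod := by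
        rw [walk_add, walk_cylSet hωc]
        congr 1
        rw [List.map_congr_left (fun i hi => hωF i (List.mem_range.mp hi)), map_range_getD]
      exact hωB (N + u.length) (by omega) (by omega) (by rw [hw]; exact huH)
    calc P (E ∩ B ∩ cylSet X N v) ≤ P (B ∩ cylSet X N v) :=
          measure_mono fun ω ⟨⟨_, h2⟩, h3⟩ => ⟨h2, h3⟩
      _ ≤ (1 - (u.map fun x => μ {x}).prod) * P (cylSet X N v) := cyl_step hX N v u B hB'
      _ ≤ (1 - δ) * P (cylSet X N v) := mul_le_mul_left (tsub_le_tsub_left huδ 1) _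
      _ = (1 - δ) * P (E ∩ cylSet X N v) := by rw [Set.inter_eq_right.mpr hsubE]
  · rw [Set.not_nonempty_iff_eq_empty] at hv
    have : E ∩ B ∩ cylSet X N v = ∅ := by
      apply Set.eq_empty_of_subset_empty
      rw [← hv]
      exact fun ω ⟨⟨h1, _⟩, h2⟩ => ⟨h1, h2⟩
    simp [this]

end Main

/-- A measure on a group is nondegenerate if its support generates the group as a
semigroup. -/
def Nondeg {G : Type*} [Group G] [MeasurableSpace G] (μ : Measure G) : Prop :=
  ∀ g : G, ∃ l : List G, l ≠ [] ∧ (∀ x ∈ l, 0 < μ {x}) ∧ l.prod = g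

/-- A subset `H` of a group is cofinite if `H * J = G` for some finite `J`. -/
def Cofinite {G : Type*} [Group G] (H : Set G) : Prop :=
  ∃ J : Finset G, ∀ g : G, ∃ h ∈ H, ∃ j ∈ J, g = h * j

/-- If `H ⊆ G` is a cofinite subset of a countable group and `μ` is a nondegenerate
probability measure on `G`, then almost every path of the right random `μ`-walk visits `H`
infinitely often. -/
theorem cofinite_visited_infinitely_often {G : Type*} [Group G] [Countable G]
    [MeasurableSpace G] [MeasurableSingletonClass G]
    (H : Set G) (hH : Cofinite H)
    (μ : Measure G) [IsProbabilityMeasure μ] (hμ : Nondeg μ)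
    {Ω : Type*} [MeasurableSpace Ω] (P : Measure Ω) [IsProbabilityMeasure P]
    (X : ℕ → Ω → G) (hX : IsRW μ P X) :
    ∀ᵐ ω ∂P, {n : ℕ | walk X ω n ∈ H}.Infinite := by
  classical
  obtain ⟨J, hJ⟩ := hH
  choose hfun hfH jfun hjJ hjeq using hJ
  choose w hwne hwpos hwprod using hμ
  have hJne : J.Nonempty := ⟨jfun 1, hjJ 1⟩
  set L := J.sup fun a => (w a⁻¹).length with hL
  set δ := J.inf' hJne fun a => ((w a⁻¹).map fun x => μ {x}).prod with hδ
  have hδpos : 0 < δ := by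
    rw [hδ, Finset.lt_inf'_iff]
    intro a ha
    rw [pos_iff_ne_zero]
    apply List.prod_ne_zero
    intro h0
    obtain ⟨x, hx, hx0⟩ := List.mem_map.mp h0
    exact (hwpos a⁻¹ x hx).ne' hx0
  have hword : ∀ g : G, ∃ u : List G, 1 ≤ u.length ∧ u.length ≤ L ∧ g * u.prod ∈ H ∧
      δ ≤ (u.map fun x => μ {x}).prod := by
    intro g
    refine ⟨w (jfun g)⁻¹, ?_, by rw [hL]; exact Finset.le_sup (f := fun a => (w a⁻¹).length) (hjJ g), ?_, by rw [hδ]; exact Finset.inf'_le _ (hjJ g)⟩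
    · exact List.length_pos_iff.mpr (hwne _)
    · rw [hwprod]
      have h1 : g * (jfun g)⁻¹ = hfun g := mul_inv_eq_iff_eq_mul.mpr (hjeq g)
      rw [h1]; exact hfH g
  have hL1 : 1 ≤ L := le_trans (hword 1).choose_spec.1 (hword 1).choose_spec.2.1
  set Bad : ℕ → Set Ω := fun k =>
    {ω | ∀ m, k * L < m → m ≤ (k + 1) * L → walk X ω m ∉ H} with hBad
  have hBadMeas : ∀ k, MeasurableSet (Bad k) := by
    intro k
    have : Bad k = ⋂ m, ⋂ (_ : k * L < m), ⋂ (_ : m ≤ (k + 1) * L),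
        (fun ω => walk X ω m) ⁻¹' Hᶜ := by
      ext ω; simp [hBad]
    rw [this]
    exact MeasurableSet.iInter fun m => MeasurableSet.iInter fun _ =>
      MeasurableSet.iInter fun _ =>
        (measurable_walk hX.1 m) (Set.to_countable Hᶜ).measurableSet
  have key : ∀ t K0, P (⋂ k ∈ Finset.Ico K0 (K0 + t), Bad k) ≤ (1 - δ) ^ t := by
    intro t
    induction t with
    | zero => intro K0; simp
    | succ t ih =>
      intro K0
      have hIco : Finset.Ico K0 (K0 + (t + 1)) = insert (K0 + t) (Finset.Ico K0 (K0 + t)) := by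
        rw [← Nat.add_assoc]
        exact Nat.Ico_succ_right_eq_insert_Ico (Nat.le_add_right _ _)
      rw [hIco, Finset.set_biInter_insert]
      set E := ⋂ k ∈ Finset.Ico K0 (K0 + t), Bad k with hE
      have hEmeas : MeasurableSet E :=
        MeasurableSet.biInter (Finset.Ico K0 (K0 + t)).countable_toSet fun k _ => hBadMeas k
      have hEpre : ∀ ω ω', (∀ i < (K0 + t) * L, X i ω = X i ω') → ω ∈ E → ω' ∈ E := by
        intro ω ω' hagree hωE
        rw [hE, Set.mem_iInter₂] at hωE ⊢
        intro k hk m hm1 hm2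
        have hk' : k + 1 ≤ K0 + t := (Finset.mem_Ico.mp hk).2
        have hm3 : m ≤ (K0 + t) * L := le_trans hm2 (Nat.mul_le_mul_right L hk')
        have hwalk : walk X ω' m = walk X ω m :=
          congrArg List.prod (List.map_congr_left fun i hi =>
            (hagree i (lt_of_lt_of_le (List.mem_range.mp hi) hm3)).symm)
        rw [hwalk]
        exact hωE k hk m hm1 hm2
      calc P (Bad (K0 + t) ∩ E) = P (E ∩ Bad (K0 + t)) := by rw [Set.inter_comm]
        _ ≤ (1 - δ) * P E := window_step hX hword (K0 + t) E hEmeas hEpre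
        _ ≤ (1 - δ) * (1 - δ) ^ t := mul_le_mul_right (ih K0) _
        _ = (1 - δ) ^ (t + 1) := by rw [pow_succ, mul_comm]
  have hδlt1 : 1 - δ < 1 := ENNReal.sub_lt_self ENNReal.one_ne_top one_ne_zero hδpos.ne'
  have hC : ∀ N0 : ℕ, P {ω | ∀ n, N0 ≤ n → walk X ω n ∉ H} = 0 := by
    intro N0
    have hsub : ∀ t, {ω | ∀ n, N0 ≤ n → walk X ω n ∉ H}
        ⊆ ⋂ k ∈ Finset.Ico N0 (N0 + t), Bad k := by
      intro t ω hω
      rw [Set.mem_iInter₂]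
      intro k hk m hm1 hm2
      have h1 : N0 ≤ k := (Finset.mem_Ico.mp hk).1
      have h2 : k ≤ k * L := Nat.le_mul_of_pos_right k (by omega)
      exact hω m (by omega)
    have hbound : ∀ t, P {ω | ∀ n, N0 ≤ n → walk X ω n ∉ H} ≤ (1 - δ) ^ t :=
      fun t => le_trans (measure_mono (hsub t)) (key t N0)
    exact le_antisymm
      (ge_of_tendsto' (ENNReal.tendsto_pow_atTop_nhds_zero_of_lt_one hδlt1) hbound)
      zero_le
  rw [MeasureTheory.ae_iff]
  apply measure_mono_null (t := ⋃ N0 : ℕ, {ω | ∀ n, N0 ≤ n → walk X ω n ∉ H})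
  · intro ω hω
    simp only [Set.mem_setOf_eq] at hω
    have hfin : {n : ℕ | walk X ω n ∈ H}.Finite := Set.not_infinite.mp hω
    obtain ⟨N0, hN0⟩ := hfin.bddAbove
    rw [Set.mem_iUnion]
    refine ⟨N0 + 1, fun n hn hmem => ?_⟩
    exact absurd (hN0 hmem) (by omega)
  · exact measure_iUnion_null hC
end
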